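/- Let α < β be real numbers, d > 0, b > 0, and let I, c : [α, β] → ℝ be continuous. Then there exists a twice continuously differentiable function u : [α, β] → ℝ satisfying d u''(x) + f(u(x)) − u(x)/b + c(x)/b + I(x) = 0 for all x ∈ [α, β], together with the Neumann boundary conditions u'(α) = 0 and u'(β) = 0. (Equivalently, the non-homogeneous FHN reaction–diffusion system has a stationary solution (u, v) with v = (u − c)/b.) -/

import Mathlib

open Set Real Filter Topology

namespace FHNaux


/-- clamp `x` into `[lo, hi]`. -/
noncomputable def cl (lo hi x : ℝ) : ℝ := max lo (min x hi)

lemma cl_of_mem {lo hi x : ℝ} (h1 : lo ≤ x) (h2 : x ≤ hi) : cl lo hi x = x := by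
  rw [cl, min_eq_left h2, max_eq_right h1]

lemma cl_mem {lo hi : ℝ} (h : lo ≤ hi) (x : ℝ) : cl lo hi x ∈ Icc lo hi :=
  ⟨le_max_left _ _, max_le h (min_le_right _ _)⟩

lemma cl_dist (lo hi s t : ℝ) : |cl lo hi s - cl lo hi t| ≤ |s - t| := by
  have h1 : |min s hi - min t hi| ≤ max |s - t| |hi - hi| := abs_min_sub_min_le_max s hi t hi
  have h2 : |max lo (min s hi) - max lo (min t hi)| ≤ |min s hi - min t hi| := by
    have := abs_max_sub_max_le_abs (min s hi) (min t hi) lo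
    simpa [max_comm] using this
  simp only [sub_self, abs_zero] at h1
  calc |cl lo hi s - cl lo hi t| ≤ |min s hi - min t hi| := h2
    _ ≤ max |s - t| 0 := h1
    _ = |s - t| := by simp [abs_nonneg]

lemma cl_continuous (lo hi : ℝ) : Continuous (cl lo hi) :=
  continuous_const.max (continuous_id.min continuous_const)

lemma cl_eq_hi {lo hi x : ℝ} (h : lo ≤ hi) (hx : hi ≤ x) : cl lo hi x = hi := by
  rw [cl, min_eq_right hx, max_eq_right h]

lemma cl_eq_lo {lo hi x : ℝ} (h : lo ≤ hi) (hx : x ≤ lo) : cl lo hi x = lo := by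
  rw [cl, min_eq_left (hx.trans h), max_eq_left hx]

lemma abs_sub_le' (p q : ℝ) : |p - q| ≤ |p| + |q| := by
  rw [sub_eq_add_neg]
  exact (abs_add_le _ _).trans (by rw [abs_neg])

/-- monotonicity from derivative. -/
lemma mono_aux {a b : ℝ} {g g' : ℝ → ℝ}
    (hg : ∀ t ∈ Icc a b, HasDerivAt g (g' t) t) (h0 : ∀ t ∈ Icc a b, 0 ≤ g' t) :
    MonotoneOn g (Icc a b) := by
  apply monotoneOn_of_deriv_nonneg (convex_Icc _ _)
    (fun t ht => (hg t ht).continuousAt.continuousWithinAt)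
    (fun t ht => ((hg t (interior_subset ht)).differentiableAt).differentiableWithinAt)
  intro t ht
  rw [(hg t (interior_subset ht)).deriv]
  exact h0 t (interior_subset ht)

lemma strict_mono_aux {a b : ℝ} {g g' : ℝ → ℝ}
    (hg : ∀ t ∈ Icc a b, HasDerivAt g (g' t) t) (h0 : ∀ t ∈ interior (Icc a b), 0 < g' t) :
    StrictMonoOn g (Icc a b) := by
  apply strictMonoOn_of_deriv_pos (convex_Icc _ _)
    (fun t ht => (hg t ht).continuousAt.continuousWithinAt)
  intro t ht
  rw [(hg t (interior_subset ht)).deriv]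
  exact h0 t ht

lemma strict_anti_aux {a b : ℝ} {g g' : ℝ → ℝ}
    (hg : ∀ t ∈ Icc a b, HasDerivAt g (g' t) t) (h0 : ∀ t ∈ interior (Icc a b), g' t < 0) :
    StrictAntiOn g (Icc a b) := by
  apply strictAntiOn_of_deriv_neg (convex_Icc _ _)
    (fun t ht => (hg t ht).continuousAt.continuousWithinAt)
  intro t ht
  rw [(hg t (interior_subset ht)).deriv]
  exact h0 t ht

lemma exists_pos_nbhd {s : Set ℝ} {W : ℝ → ℝ} {c : ℝ} (hWc : ContinuousOn W s) (hc : c ∈ s)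
    (h : 0 < W c) : ∃ ε > 0, ∀ t ∈ s, dist t c < ε → 0 < W t := by
  have h1 : ∀ᶠ t in 𝓝[s] c, 0 < W t := (hWc c hc).eventually (eventually_gt_nhds h)
  obtain ⟨ε, hε, h2⟩ := Metric.mem_nhdsWithin_iff.1 h1
  exact ⟨ε, hε, fun t hts hdist => h2 ⟨Metric.mem_ball.2 hdist, hts⟩⟩


/-- Shooting lemma: starting at height ≥ M with nonnegative velocity, in the region where the
acceleration is ≥ δ > 0 whenever the height is ≥ M, the trajectory stays above M with
velocity ≥ δ(t-A). -/
theorem shoot_up {A B M δ : ℝ} (hAB : A < B) (hδ : 0 < δ) {y v W : ℝ → ℝ}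
    (hy : ∀ t ∈ Icc A B, HasDerivAt y (v t) t)
    (hv : ∀ t ∈ Icc A B, HasDerivAt v (W t) t)
    (hWc : ContinuousOn W (Icc A B))
    (hW : ∀ t ∈ Icc A B, M ≤ y t → δ ≤ W t)
    (hyA : M ≤ y A) (hvA : 0 ≤ v A) :
    ∀ t ∈ Icc A B, M ≤ y t ∧ δ * (t - A) ≤ v t := by
  -- first: M ≤ y t ∧ 0 ≤ v t everywhere
  have main : ∀ t ∈ Icc A B, M ≤ y t ∧ 0 ≤ v t := by
    by_contra hcon
    push_neg at hcon
    obtain ⟨e, he, hePred⟩ := hcon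
    set E : Set ℝ := {t | t ∈ Icc A B ∧ (y t < M ∨ v t < 0)} with hE
    have heE : e ∈ E := by
      refine ⟨he, ?_⟩
      by_cases h : M ≤ y e
      · exact Or.inr (not_le.1 (fun h2 => absurd (hePred h) (not_lt.2 h2)))
      · exact Or.inl (not_le.1 h)
    have hbdd : BddBelow E := ⟨A, fun t ht => ht.1.1⟩
    set c := sInf E with hc
    have hAc : A ≤ c := le_csInf ⟨e, heE⟩ fun t ht => ht.1.1
    have hcB : c ≤ B := (csInf_le hbdd heE).trans he.2
    have hcIcc : c ∈ Icc A B := ⟨hAc, hcB⟩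
    have hbefore : ∀ t, A ≤ t → t < c → M ≤ y t ∧ 0 ≤ v t := by
      intro t hAt htc
      by_contra hcon2
      push_neg at hcon2
      have htE : t ∈ E := by
        refine ⟨⟨hAt, htc.le.trans hcB⟩, ?_⟩
        by_cases h : M ≤ y t
        · exact Or.inr (not_le.1 fun h2 => absurd (hcon2 h) (not_lt.2 h2))
        · exact Or.inl (not_le.1 h)
      exact absurd (csInf_le hbdd htE) (not_le.2 htc)
    have hc0 : M ≤ y c ∧ 0 ≤ v c := by
      rcases eq_or_lt_of_le hAc with hEq | hlt
      · rw [← hEq]; exact ⟨hyA, hvA⟩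
      · constructor
        · refine ge_of_tendsto ((hy c hcIcc).continuousAt.tendsto.mono_left nhdsWithin_le_nhds)
            (?_ : ∀ᶠ t in 𝓝[<] c, M ≤ y t)
          filter_upwards [mem_nhdsWithin_of_mem_nhds (Ioi_mem_nhds hlt), self_mem_nhdsWithin]
            with t h1 h2
          exact (hbefore t (le_of_lt h1) h2).1
        · refine ge_of_tendsto ((hv c hcIcc).continuousAt.tendsto.mono_left nhdsWithin_le_nhds)
            (?_ : ∀ᶠ t in 𝓝[<] c, 0 ≤ v t)
          filter_upwards [mem_nhdsWithin_of_mem_nhds (Ioi_mem_nhds hlt), self_mem_nhdsWithin]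
            with t h1 h2
          exact (hbefore t (le_of_lt h1) h2).2
    obtain ⟨ε, hε, hball⟩ := exists_pos_nbhd hWc hcIcc (hδ.trans_le (hW c hcIcc hc0.1))
    set c' := min (c + ε / 2) B with hc'
    have hcc' : c ≤ c' := le_min (by linarith) hcB
    have hsub : Icc c c' ⊆ Icc A B := fun t ht =>
      ⟨hAc.trans ht.1, ht.2.trans (min_le_right _ _)⟩
    have hWpos : ∀ t ∈ Icc c c', 0 < W t := by
      intro t ht
      refine hball t (hsub ht) ?_
      rw [Real.dist_eq, abs_of_nonneg (by linarith [ht.1])]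
      have : t ≤ c + ε / 2 := ht.2.trans (min_le_left _ _)
      linarith
    have hvmono : MonotoneOn v (Icc c c') :=
      mono_aux (fun t ht => hv t (hsub ht)) (fun t ht => (hWpos t ht).le)
    have hvge : ∀ t ∈ Icc c c', 0 ≤ v t := fun t ht =>
      hc0.2.trans (hvmono ⟨le_refl c, hcc'⟩ ht ht.1)
    have hymono : MonotoneOn y (Icc c c') :=
      mono_aux (fun t ht => hy t (hsub ht)) hvge
    have hyge : ∀ t ∈ Icc c c', M ≤ y t := fun t ht =>
      hc0.1.trans (hymono ⟨le_refl c, hcc'⟩ ht ht.1)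
    -- get an element of E in Icc c c'
    obtain ⟨t, htE, htlt⟩ := exists_lt_of_csInf_lt ⟨e, heE⟩ (show sInf E < c + ε / 2 by
      rw [← hc]; linarith)
    have htcc' : t ∈ Icc c c' := ⟨csInf_le hbdd htE, le_min htlt.le htE.1.2⟩
    rcases htE.2 with h | h
    · exact absurd (hyge t htcc') (not_le.2 h)
    · exact absurd (hvge t htcc') (not_le.2 h)
  -- second: the velocity lower bound
  intro t ht
  refine ⟨(main t ht).1, ?_⟩
  have hmono : MonotoneOn (fun t => v t - δ * (t - A)) (Icc A B) := by
    refine mono_aux (g' := fun t => W t - δ) (fun τ hτ => ((hv τ hτ).sub ?_)) ?_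
    · simpa using ((hasDerivAt_id τ).sub_const A).const_mul δ
    · intro τ hτ
      have := hW τ hτ (main τ hτ).1
      linarith
  have := hmono (left_mem_Icc.2 (le_of_lt hAB)) ht ht.1
  simp only [sub_self, mul_zero] at this
  linarith [this, hvA]


/-- Maximum principle: under Neumann boundary conditions, if the acceleration is positive
whenever the height exceeds M, the height cannot exceed M. -/
theorem max_le {A B M δ : ℝ} (hAB : A < B) (hδ : 0 < δ) {y v W : ℝ → ℝ}
    (hy : ∀ t ∈ Icc A B, HasDerivAt y (v t) t)
    (hv : ∀ t ∈ Icc A B, HasDerivAt v (W t) t)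
    (hWc : ContinuousOn W (Icc A B))
    (hW : ∀ t ∈ Icc A B, M < y t → δ ≤ W t)
    (hvA : v A = 0) (hvB : v B = 0) :
    ∀ t ∈ Icc A B, y t ≤ M := by
  by_contra hcon
  push_neg at hcon
  obtain ⟨t₀, ht₀, ht₀M⟩ := hcon
  have hyc : ContinuousOn y (Icc A B) := fun t ht => (hy t ht).continuousAt.continuousWithinAt
  obtain ⟨x₀, hx₀Icc, hmax⟩ := isCompact_Icc.exists_isMaxOn ⟨t₀, ht₀⟩ hyc
  have hx₀M : M < y x₀ := ht₀M.trans_le (hmax ht₀)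
  have hvx₀ : v x₀ = 0 := by
    rcases eq_or_lt_of_le hx₀Icc.1 with h1 | h1
    · rw [← h1]; exact hvA
    rcases eq_or_lt_of_le hx₀Icc.2 with h2 | h2
    · rw [h2]; exact hvB
    · exact (hmax.isLocalMax (Icc_mem_nhds h1 h2)).hasDerivAt_eq_zero (hy x₀ hx₀Icc)
  obtain ⟨ε, hε, hball⟩ := exists_pos_nbhd hWc hx₀Icc (hδ.trans_le (hW x₀ hx₀Icc hx₀M))
  rcases lt_or_eq_of_le hx₀Icc.2 with hxB | hxB
  · -- x₀ < B : y increases strictly just after x₀, contradicting the max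
    set c' := min (x₀ + ε / 2) B with hc'
    have hx₀c' : x₀ < c' := lt_min (by linarith) hxB
    have hsub : Icc x₀ c' ⊆ Icc A B := fun t ht =>
      ⟨hx₀Icc.1.trans ht.1, ht.2.trans (min_le_right _ _)⟩
    have hWpos : ∀ t ∈ Icc x₀ c', 0 < W t := by
      intro t ht
      refine hball t (hsub ht) ?_
      rw [Real.dist_eq, abs_of_nonneg (by linarith [ht.1])]
      have : t ≤ x₀ + ε / 2 := ht.2.trans (min_le_left _ _)
      linarith
    have hvsm : StrictMonoOn v (Icc x₀ c') :=
      strict_mono_aux (fun t ht => hv t (hsub ht))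
        (fun t ht => hWpos t (interior_subset ht))
    have hvpos : ∀ t ∈ interior (Icc x₀ c'), 0 < v t := by
      intro t ht
      rw [interior_Icc] at ht
      have := hvsm (left_mem_Icc.2 hx₀c'.le) ⟨ht.1.le, ht.2.le⟩ ht.1
      rw [hvx₀] at this
      exact this
    have hysm : StrictMonoOn y (Icc x₀ c') :=
      strict_mono_aux (fun t ht => hy t (hsub ht)) hvpos
    have := hysm (left_mem_Icc.2 hx₀c'.le) (right_mem_Icc.2 hx₀c'.le) hx₀c'
    exact absurd (hmax (hsub (right_mem_Icc.2 hx₀c'.le))) (not_le.2 this)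
  · -- x₀ = B : y decreases strictly just before B, contradicting the max
    set c' := max (B - ε / 2) A with hc'
    have hc'B : c' < B := max_lt (by linarith) hAB
    have hsub : Icc c' B ⊆ Icc A B := fun t ht => ⟨(le_max_right _ _).trans ht.1, ht.2⟩
    have hWpos : ∀ t ∈ Icc c' B, 0 < W t := by
      intro t ht
      refine hball t (hsub ht) ?_
      rw [hxB] at *
      rw [Real.dist_eq, abs_of_nonpos (by linarith [ht.2])]
      have : B - ε / 2 ≤ t := (le_max_left _ _).trans ht.1
      linarith
    have hvsm : StrictMonoOn v (Icc c' B) :=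
      strict_mono_aux (fun t ht => hv t (hsub ht))
        (fun t ht => hWpos t (interior_subset ht))
    have hvneg : ∀ t ∈ interior (Icc c' B), v t < 0 := by
      intro t ht
      rw [interior_Icc] at ht
      have := hvsm ⟨ht.1.le, ht.2.le⟩ (right_mem_Icc.2 hc'B.le) ht.2
      rw [hvB] at this
      exact this
    have hysa : StrictAntiOn y (Icc c' B) :=
      strict_anti_aux (fun t ht => hy t (hsub ht)) hvneg
    have h2 := hysa (left_mem_Icc.2 hc'B.le) (right_mem_Icc.2 hc'B.le) hc'B
    have h3 := hmax (hsub (left_mem_Icc.2 hc'B.le))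
    rw [hxB] at h3
    exact absurd h3 (not_le.2 h2)


/-- Gluing two differentiable functions with matching value and derivative at a point. -/
lemma hasDerivAt_glue {a df : ℝ} {F f g : ℝ → ℝ}
    (hf : HasDerivAt f df a) (hg : HasDerivAt g df a)
    (hFl : ∀ᶠ t in 𝓝 a, t ≤ a → F t = f t)
    (hFr : ∀ᶠ t in 𝓝 a, a ≤ t → F t = g t) :
    HasDerivAt F df a := by
  have hFa : F a = f a := hFl.self_of_nhds (le_refl a)
  have hFa' : F a = g a := hFr.self_of_nhds (le_refl a)
  have h1 : HasDerivWithinAt F df (Iic a) a := by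
    refine hf.hasDerivWithinAt.congr_of_eventuallyEq ?_ hFa
    filter_upwards [hFl.filter_mono nhdsWithin_le_nhds, self_mem_nhdsWithin] with t h1 h2
    exact h1 h2
  have h2 : HasDerivWithinAt F df (Ici a) a := by
    refine hg.hasDerivWithinAt.congr_of_eventuallyEq ?_ hFa'
    filter_upwards [hFr.filter_mono nhdsWithin_le_nhds, self_mem_nhdsWithin] with t h1 h2
    exact h1 h2
  have h3 := h1.union h2
  rwa [Iic_union_Ici, hasDerivWithinAt_univ] at h3

/-- quadratic Taylor polynomial has derivative -/
lemma hasDerivAt_quad (p q r a x : ℝ) :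
    HasDerivAt (fun x => p + q * (x - a) + r * (x - a) ^ 2 / 2) (q + r * (x - a)) x := by
  have h1 : HasDerivAt (fun x : ℝ => x - a) 1 x := (hasDerivAt_id x).sub_const a
  have t1 : HasDerivAt (fun x => q * (x - a)) q x := by simpa using h1.const_mul q
  have t2 : HasDerivAt (fun x => r * (x - a) ^ 2 / 2) (r * (x - a)) x := by
    have h2 : HasDerivAt (fun y => r * (y - a) ^ 2 / 2) (r * (↑2 * (x - a) ^ (2 - 1) * 1) / 2) x :=
      ((h1.pow 2).const_mul r).div_const 2
    exact h2.congr_deriv (by rw [show (2:ℕ) - 1 = 1 from rfl]; push_cast; ring)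
  simpa [Pi.add_def] using ((hasDerivAt_const x p).add t1).add t2

/-- linear function has derivative -/
lemma hasDerivAt_lin (p q a x : ℝ) :
    HasDerivAt (fun x => p + q * (x - a)) q x := by
  have h1 : HasDerivAt (fun x : ℝ => x - a) 1 x := (hasDerivAt_id x).sub_const a
  simpa [Pi.add_def] using (hasDerivAt_const x p).add (h1.const_mul q)

/-- Glue a C² function on `[A', B']` (with two-sided derivative data on the closed interval)
to a globally C² function on ℝ agreeing with it on `[A', B']`. -/
theorem glue3 {A' B' : ℝ} (hA'B' : A' < B') {Y Vv W : ℝ → ℝ}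
    (hY : ∀ x ∈ Icc A' B', HasDerivAt Y (Vv x) x)
    (hV : ∀ x ∈ Icc A' B', HasDerivAt Vv (W x) x)
    (hWc : ContinuousOn W (Icc A' B')) :
    ∃ u : ℝ → ℝ, ContDiff ℝ 2 u ∧
      ∀ x ∈ Icc A' B', u x = Y x ∧ deriv u x = Vv x ∧ deriv (deriv u) x = W x := by
  set qa : ℝ → ℝ := fun x => Y A' + Vv A' * (x - A') + W A' * (x - A') ^ 2 / 2 with hqa_def
  set qb : ℝ → ℝ := fun x => Y B' + Vv B' * (x - B') + W B' * (x - B') ^ 2 / 2 with hqb_def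
  set u : ℝ → ℝ := fun x => if x < A' then qa x else if x < B' then Y x else qb x with hu_def
  set la : ℝ → ℝ := fun x => Vv A' + W A' * (x - A') with hla_def
  set lb : ℝ → ℝ := fun x => Vv B' + W B' * (x - B') with hlb_def
  set U1 : ℝ → ℝ := fun x => if x < A' then la x else if x < B' then Vv x else lb x with hU1_def
  set U2 : ℝ → ℝ := fun x => W (cl A' B' x) with hU2_def
  have hA'mem : A' ∈ Icc A' B' := ⟨le_refl _, hA'B'.le⟩
  have hB'mem : B' ∈ Icc A' B' := ⟨hA'B'.le, le_refl _⟩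
  have hqaA' : qa A' = Y A' := by simp [hqa_def]
  have hqbB' : qb B' = Y B' := by simp [hqb_def]
  -- values of u on pieces
  have huY : ∀ x, A' ≤ x → x ≤ B' → u x = Y x := by
    intro x h1 h2
    rw [hu_def]
    simp only [if_neg (not_lt.2 h1)]
    rcases lt_or_eq_of_le h2 with h | h
    · rw [if_pos h]
    · rw [h, if_neg (lt_irrefl B'), hqbB']
  have huqa : ∀ x, x ≤ A' → u x = qa x := by
    intro x h1
    rcases lt_or_eq_of_le h1 with h | h
    · rw [hu_def]; simp only [if_pos h]
    · rw [h, huY A' (le_refl _) hA'B'.le, hqaA']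
  have huqb : ∀ x, B' ≤ x → u x = qb x := by
    intro x h1
    rw [hu_def]
    simp only [if_neg (not_lt.2 (hA'B'.le.trans h1)), if_neg (not_lt.2 h1)]
  have hU1V : ∀ x, A' ≤ x → x ≤ B' → U1 x = Vv x := by
    intro x h1 h2
    rw [hU1_def]
    simp only [if_neg (not_lt.2 h1)]
    rcases lt_or_eq_of_le h2 with h | h
    · rw [if_pos h]
    · rw [h, if_neg (lt_irrefl B'), hlb_def]; simp
  have hU1la : ∀ x, x ≤ A' → U1 x = la x := by
    intro x h1
    rcases lt_or_eq_of_le h1 with h | h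
    · rw [hU1_def]; simp only [if_pos h]
    · rw [h, hU1V A' (le_refl _) hA'B'.le, hla_def]; simp
  have hU1lb : ∀ x, B' ≤ x → U1 x = lb x := by
    intro x h1
    rw [hU1_def]
    simp only [if_neg (not_lt.2 (hA'B'.le.trans h1)), if_neg (not_lt.2 h1)]
  have hU2W : ∀ x, A' ≤ x → x ≤ B' → U2 x = W x := by
    intro x h1 h2; rw [hU2_def]; simp only []; rw [cl_of_mem h1 h2]
  have hU2la : ∀ x, x ≤ A' → U2 x = W A' := by
    intro x h1; rw [hU2_def]; simp only []; rw [cl_eq_lo hA'B'.le h1]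
  have hU2lb : ∀ x, B' ≤ x → U2 x = W B' := by
    intro x h1; rw [hU2_def]; simp only []; rw [cl_eq_hi hA'B'.le h1]
  -- first derivative everywhere
  have hu1 : ∀ x, HasDerivAt u (U1 x) x := by
    intro x
    rcases lt_trichotomy x A' with hx | hx | hx
    · rw [hU1la x hx.le, hla_def]
      refine (hasDerivAt_quad (Y A') (Vv A') (W A') A' x).congr_of_eventuallyEq ?_
      filter_upwards [Iio_mem_nhds hx] with t ht
      exact huqa t (le_of_lt ht)
    · subst hx
      rw [hU1V x (le_refl _) hA'B'.le]
      have hfq := hasDerivAt_quad (Y x) (Vv x) (W x) x x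
      simp only [sub_self, mul_zero, add_zero] at hfq
      refine hasDerivAt_glue (f := qa) (g := Y) hfq (hY x hA'mem)
        (Eventually.of_forall fun t ht => huqa t ht) ?_
      filter_upwards [Iio_mem_nhds hA'B'] with t h1 h2
      exact huY t h2 h1.le
    · rcases lt_trichotomy x B' with hx2 | hx2 | hx2
      · rw [hU1V x hx.le hx2.le]
        refine (hY x ⟨hx.le, hx2.le⟩).congr_of_eventuallyEq ?_
        filter_upwards [Ioi_mem_nhds hx, Iio_mem_nhds hx2] with t h1 h2
        exact huY t (le_of_lt h1) (le_of_lt h2)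
      · subst hx2
        rw [hU1V x hA'B'.le (le_refl _)]
        have hgq := hasDerivAt_quad (Y x) (Vv x) (W x) x x
        simp only [sub_self, mul_zero, add_zero] at hgq
        refine hasDerivAt_glue (f := Y) (g := qb) (hY x hB'mem) hgq ?_
          (Eventually.of_forall fun t ht => huqb t ht)
        filter_upwards [Ioi_mem_nhds hA'B'] with t h1 h2
        exact huY t h1.le h2
      · rw [hU1lb x hx2.le, hlb_def]
        refine (hasDerivAt_quad (Y B') (Vv B') (W B') B' x).congr_of_eventuallyEq ?_
        filter_upwards [Ioi_mem_nhds hx2] with t ht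
        exact huqb t (le_of_lt ht)
  -- second derivative everywhere
  have hu2 : ∀ x, HasDerivAt U1 (U2 x) x := by
    intro x
    rcases lt_trichotomy x A' with hx | hx | hx
    · rw [hU2la x hx.le]
      refine (hasDerivAt_lin (Vv A') (W A') A' x).congr_of_eventuallyEq ?_
      filter_upwards [Iio_mem_nhds hx] with t ht
      rw [hU1la t (le_of_lt ht), hla_def]
    · subst hx
      rw [hU2la x (le_refl _)]
      refine hasDerivAt_glue (f := la) (g := Vv) (hasDerivAt_lin (Vv x) (W x) x x)
        (hV x hA'mem) (Eventually.of_forall fun t ht => hU1la t ht) ?_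
      filter_upwards [Iio_mem_nhds hA'B'] with t h1 h2
      exact hU1V t h2 h1.le
    · rcases lt_trichotomy x B' with hx2 | hx2 | hx2
      · rw [hU2W x hx.le hx2.le]
        refine (hV x ⟨hx.le, hx2.le⟩).congr_of_eventuallyEq ?_
        filter_upwards [Ioi_mem_nhds hx, Iio_mem_nhds hx2] with t h1 h2
        exact hU1V t (le_of_lt h1) (le_of_lt h2)
      · subst hx2
        rw [hU2lb x (le_refl _)]
        refine hasDerivAt_glue (f := Vv) (g := lb) (hV x hB'mem)
          (hasDerivAt_lin (Vv x) (W x) x x) ?_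
          (Eventually.of_forall fun t ht => hU1lb t ht)
        filter_upwards [Ioi_mem_nhds hA'B'] with t h1 h2
        exact hU1V t h1.le h2
      · rw [hU2lb x hx2.le]
        refine (hasDerivAt_lin (Vv B') (W B') B' x).congr_of_eventuallyEq ?_
        filter_upwards [Ioi_mem_nhds hx2] with t ht
        rw [hU1lb t (le_of_lt ht), hlb_def]
  -- continuity of U2
  have hU2c : Continuous U2 := by
    rw [hU2_def]
    exact hWc.comp_continuous (cl_continuous A' B') (fun x => cl_mem hA'B'.le x)
  -- assemble
  have hderiv_u : deriv u = U1 := funext fun x => (hu1 x).deriv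
  have hderiv_U1 : deriv U1 = U2 := funext fun x => (hu2 x).deriv
  have hsmooth : ContDiff ℝ 2 u := by
    rw [show (2 : WithTop ℕ∞) = 1 + 1 by norm_num, contDiff_succ_iff_deriv]
    refine ⟨fun x => (hu1 x).differentiableAt, by simp, ?_⟩
    rw [hderiv_u, contDiff_one_iff_deriv]
    exact ⟨fun x => (hu2 x).differentiableAt, by rw [hderiv_U1]; exact hU2c⟩
  refine ⟨u, hsmooth, fun x hx => ⟨huY x hx.1 hx.2, ?_, ?_⟩⟩
  · rw [hderiv_u]; exact hU1V x hx.1 hx.2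
  · rw [hderiv_u, hderiv_U1]; exact hU2W x hx.1 hx.2


set_option maxHeartbeats 1600000 in
/-- The truncated right-hand side of the reduced FHN stationary equation, with all the
properties needed for the shooting argument. -/
lemma exists_H (b d M Γ : ℝ) (hb : 0 < b) (hd : 0 < d) (Gh : ℝ → ℝ)
    (hGhc : Continuous Gh) (hΓ : ∀ x, |Gh x| ≤ Γ) (hΓ0 : 0 ≤ Γ)
    (hM2 : 2 ≤ M) (hMΓ : Γ + 3 ≤ M) :
    ∃ CC Lp : ℝ, 0 ≤ CC ∧ ∃ H : ℝ → ℝ → ℝ,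
      (∀ x z, |H x z| ≤ CC) ∧
      (∀ x z, M ≤ z → 3/d ≤ H x z) ∧
      (∀ x z, z ≤ -M → H x z ≤ -(3/d)) ∧
      (∀ x, LipschitzWith (Real.toNNReal Lp) (H x)) ∧
      (Continuous fun p : ℝ × ℝ => H p.1 p.2) ∧
      (∀ x z, -M ≤ z → z ≤ M → H x z = (z^3 - 3*z + z/b - Gh x) / d) := by
  have hM0 : (0:ℝ) < M := by linarith
  have hMM : -M ≤ M := by linarith
  have hMb : 0 < M / b := div_pos hM0 hb
  have hM3 : 0 ≤ M^3 := pow_nonneg hM0.le 3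
  have hFM : Γ + 3 ≤ M^3 - 3*M + M/b := by
    have hMsq : (4:ℝ) ≤ M^2 := by nlinarith
    have h2 : 4*M ≤ M^3 := by nlinarith
    linarith
  refine ⟨(M^3 + 3*M + M/b + Γ) / d, (3*M^2 + 3 + 1/b) / d, ?_,
    (fun x z => ((cl (-M) M z)^3 - 3*(cl (-M) M z) + (cl (-M) M z)/b - Gh x) / d),
    ?_, ?_, ?_, ?_, ?_, ?_⟩
  · apply div_nonneg _ hd.le; linarith
  · -- bound
    intro x z
    beta_reduce
    have hz : |cl (-M) M z| ≤ M := by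
      have := cl_mem hMM z; exact abs_le.2 ⟨this.1, this.2⟩
    set w := cl (-M) M z with hw
    clear_value w
    obtain ⟨hz1, hz2⟩ := abs_le.1 hz
    have hc1 : w^3 ≤ M^3 := by nlinarith [sq_nonneg (w+M), sq_nonneg (w-M)]
    have hc2 : -(M^3) ≤ w^3 := by nlinarith [sq_nonneg (w+M), sq_nonneg (w-M)]
    have hb1 : w/b ≤ M/b := by gcongr
    have hb2 : -(M/b) ≤ w/b := by rw [← neg_div]; gcongr
    obtain ⟨hg1, hg2⟩ := abs_le.1 (hΓ x)
    rw [abs_div, abs_of_pos hd]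
    gcongr
    rw [abs_le]
    constructor <;> nlinarith
  · -- up
    intro x z hz
    beta_reduce
    rw [cl_eq_hi hMM hz]
    obtain ⟨hg1, hg2⟩ := abs_le.1 (hΓ x)
    gcongr
    linarith
  · -- down
    intro x z hz
    beta_reduce
    rw [cl_eq_lo hMM hz, ← neg_div]
    obtain ⟨hg1, hg2⟩ := abs_le.1 (hΓ x)
    gcongr
    nlinarith [neg_div b M]
  · -- Lipschitz
    intro x
    have hLF0 : 0 ≤ 3*M^2 + 3 + 1/b := by
      have : 0 < 1/b := by positivity
      nlinarith [sq_nonneg M]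
    have hLFd0 : 0 ≤ (3*M^2 + 3 + 1/b) / d := div_nonneg hLF0 hd.le
    refine LipschitzWith.of_dist_le_mul fun p q => ?_
    rw [Real.coe_toNNReal _ hLFd0, Real.dist_eq, Real.dist_eq]
    beta_reduce
    set p' := cl (-M) M p with hp'
    set q' := cl (-M) M q with hq'
    clear_value p' q'
    have hp'M : |p'| ≤ M := by
      rw [hp']; have := cl_mem hMM p; exact abs_le.2 ⟨this.1, this.2⟩
    have hq'M : |q'| ≤ M := by
      rw [hq']; have := cl_mem hMM q; exact abs_le.2 ⟨this.1, this.2⟩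
    have hdiff : (p'^3 - 3*p' + p'/b - Gh x) / d - (q'^3 - 3*q' + q'/b - Gh x) / d
        = ((p'^3 - 3*p' + p'/b) - (q'^3 - 3*q' + q'/b)) / d := by ring
    have hFd : |(p'^3 - 3*p' + p'/b) - (q'^3 - 3*q' + q'/b)|
        ≤ (3*M^2 + 3 + 1/b) * |p' - q'| := by
      have he : (p'^3 - 3*p' + p'/b) - (q'^3 - 3*q' + q'/b)
          = (p' - q') * (p'^2 + p'*q' + q'^2 - 3 + 1/b) := by field_simp; ring
      rw [he, abs_mul, mul_comm (3*M^2 + 3 + 1/b) _]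
      gcongr
      obtain ⟨h1a, h1b⟩ := abs_le.1 hp'M
      obtain ⟨h2a, h2b⟩ := abs_le.1 hq'M
      have h3 : |p' * q'| ≤ M^2 := by
        rw [abs_mul]
        calc |p'| * |q'| ≤ M * M := mul_le_mul hp'M hq'M (abs_nonneg _) hM0.le
          _ = M^2 := by ring
      obtain ⟨h4a, h4b⟩ := abs_le.1 h3
      have h5 : p'^2 ≤ M^2 := by
        nlinarith [mul_nonneg (by linarith : (0:ℝ) ≤ M - p') (by linarith : (0:ℝ) ≤ M + p')]
      have h6 : q'^2 ≤ M^2 := by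
        nlinarith [mul_nonneg (by linarith : (0:ℝ) ≤ M - q') (by linarith : (0:ℝ) ≤ M + q')]
      have h7 : 0 < 1/b := by positivity
      have h8 : (0:ℝ) ≤ M^2 := sq_nonneg M
      rw [abs_le]
      constructor
      · linarith [sq_nonneg p', sq_nonneg q']
      · linarith
    have hcl : |p' - q'| ≤ |p - q| := by rw [hp', hq']; exact cl_dist (-M) M p q
    rw [hdiff, abs_div, abs_of_pos hd, div_le_iff₀ hd]
    calc |(p'^3 - 3*p' + p'/b) - (q'^3 - 3*q' + q'/b)|
        ≤ (3*M^2 + 3 + 1/b) * |p' - q'| := hFd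
      _ ≤ (3*M^2 + 3 + 1/b) * |p - q| := by gcongr
      _ = (3*M^2 + 3 + 1/b) / d * |p - q| * d := by field_simp
  · -- continuity
    have hclc : Continuous fun p : ℝ × ℝ => cl (-M) M p.2 :=
      (cl_continuous (-M) M).comp continuous_snd
    exact ((((hclc.pow 3).sub (continuous_const.mul hclc)).add (hclc.div_const b)).sub
      (hGhc.comp continuous_fst)).div_const d
  · -- value on [-M, M]
    intro x z h1 h2
    beta_reduce
    rw [cl_of_mem h1 h2]


set_option maxHeartbeats 1600000 in
/-- Global solutions of the truncated second-order ODE `y'' = H x y` on `[α-1, β+1]`,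
depending continuously on the initial height. -/
lemma exists_sol (α β CC Lp : ℝ) (hab : α < β) (hCC0 : 0 ≤ CC) (H : ℝ → ℝ → ℝ)
    (hHb : ∀ x z, |H x z| ≤ CC)
    (hH_lip : ∀ x, LipschitzWith (Real.toNNReal Lp) (H x))
    (hH_cont : Continuous fun p : ℝ × ℝ => H p.1 p.2) :
    ∃ y v : ℝ → ℝ → ℝ,
      (∀ s, y s α = s) ∧ (∀ s, v s α = 0) ∧
      (∀ s, ∀ t ∈ Ioo (α-1) (β+1), HasDerivAt (y s) (v s t) t) ∧
      (∀ s, ∀ t ∈ Ioo (α-1) (β+1), HasDerivAt (v s) (H t (y s t)) t) ∧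
      Continuous (fun s => v s β) := by
  set K : ℝ := CC * (β - α + 2) + 1 with hK_def
  have hK0 : 0 < K := by
    have : 0 ≤ CC * (β - α + 2) := mul_nonneg hCC0 (by linarith)
    rw [hK_def]; linarith
  have hKK : -K ≤ K := by linarith
  set V : ℝ → ℝ × ℝ → ℝ × ℝ := fun x p => (cl (-K) K p.2, H x p.1) with hV_def
  set Lm : NNReal := max 1 (Real.toNNReal Lp) with hLm_def
  have hV_lip : ∀ x, LipschitzWith Lm (V x) := by
    intro x
    have h1 : LipschitzWith 1 (fun p : ℝ × ℝ => cl (-K) K p.2) := by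
      refine LipschitzWith.of_dist_le_mul fun p q => ?_
      rw [NNReal.coe_one, one_mul, Real.dist_eq]
      refine (cl_dist (-K) K p.2 q.2).trans ?_
      rw [← Real.dist_eq, Prod.dist_eq]
      exact le_max_right _ _
    have h2 : LipschitzWith (Real.toNNReal Lp) (fun p : ℝ × ℝ => H x p.1) := by
      refine LipschitzWith.of_dist_le_mul fun p q => ?_
      refine ((hH_lip x).dist_le_mul p.1 q.1).trans ?_
      have h3 : dist p.1 q.1 ≤ dist p q := by rw [Prod.dist_eq]; exact le_max_left _ _
      exact mul_le_mul_of_nonneg_left h3 (Real.toNNReal Lp).coe_nonneg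
    exact h1.prodMk h2
  have hV_bound : ∀ x p, ‖V x p‖ ≤ max K CC := by
    intro x p
    rw [Prod.norm_def]
    refine max_le_max ?_ ?_
    · rw [Real.norm_eq_abs]
      have := cl_mem hKK p.2
      exact abs_le.2 ⟨this.1, this.2⟩
    · rw [Real.norm_eq_abs]; exact hHb x p.1
  have hCf0 : (0:ℝ) ≤ max K CC := le_trans hK0.le (le_max_left _ _)
  have hex : ∀ s : ℝ, ∃ f : ℝ → ℝ × ℝ, f α = (s, 0) ∧
      ∀ t ∈ Icc (α-1) (β+1), HasDerivWithinAt f (V t (f t)) (Icc (α-1) (β+1)) t := by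
    intro s
    have hpl : IsPicardLindelof V (tmin := α-1) (tmax := β+1) ⟨α, by constructor <;> linarith⟩
        (s, 0) (Real.toNNReal (max K CC * (β - α + 2))) 0 (Real.toNNReal (max K CC)) Lm :=
      { lipschitzOnWith := fun t _ => (hV_lip t).lipschitzOnWith
        continuousOn := fun p _ => by
          refine Continuous.continuousOn ?_
          refine continuous_const.prodMk ?_
          exact hH_cont.comp (continuous_id.prodMk continuous_const)
        norm_le := fun t _ p _ => by rw [Real.coe_toNNReal _ hCf0]; exact hV_bound t p
        mul_max_le := by
          have h1 : max (β + 1 - α) (α - (α - 1)) = β + 1 - α := by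
            rw [max_eq_left]; linarith
          simp only [Real.coe_toNNReal _ hCf0, NNReal.coe_zero, sub_zero,
            Real.coe_toNNReal _ (mul_nonneg hCf0 (by linarith : (0:ℝ) ≤ β - α + 2))]
          rw [h1]
          gcongr
          · linarith }
    exact hpl.exists_eq_forall_mem_Icc_hasDerivWithinAt₀
  choose sol hsol0 hsolD using hex
  have hJsub : Icc α β ⊆ Icc (α-1) (β+1) := fun t ht => ⟨by linarith [ht.1], by linarith [ht.2]⟩
  have hsolD' : ∀ s, ∀ t ∈ Ioo (α-1) (β+1), HasDerivAt (sol s) (V t (sol s t)) t :=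
    fun s t ht => (hsolD s t (Ioo_subset_Icc_self ht)).hasDerivAt (Icc_mem_nhds ht.1 ht.2)
  have hv0 : ∀ s, (sol s α).2 = 0 := fun s => by rw [hsol0 s]
  -- derivative of the velocity component, on all of the closed interval
  have hvDJ : ∀ s, ∀ t ∈ Icc (α-1) (β+1), HasDerivWithinAt (fun τ => (sol s τ).2)
      (H t ((sol s t).1)) (Icc (α-1) (β+1)) t := by
    intro s t ht
    have h2 := (hasFDerivAt_snd (𝕜 := ℝ) (E := ℝ) (F := ℝ)).comp_hasDerivWithinAt t (hsolD s t ht)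
    simpa [hV_def, Function.comp_def] using h2
  -- a priori bound on the velocity: the velocity clamp is inactive
  have hvb : ∀ s, ∀ t ∈ Icc (α-1) (β+1), |(sol s t).2| ≤ CC * (β - α + 2) := by
    intro s t ht
    have hmvt := Convex.norm_image_sub_le_of_norm_hasDerivWithin_le
      (f := fun τ => (sol s τ).2) (f' := fun t => H t ((sol s t).1))
      (s := Icc (α-1) (β+1)) (C := CC)
      (fun τ hτ => hvDJ s τ hτ) (fun τ _ => by rw [Real.norm_eq_abs]; exact hHb τ _)
      (convex_Icc _ _) (hJsub (left_mem_Icc.2 hab.le)) ht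
    simp only [hv0 s, sub_zero, Real.norm_eq_abs] at hmvt
    have h3 : |t - α| ≤ β - α + 2 := by
      rw [abs_le]; constructor <;> [linarith [ht.1]; linarith [ht.2]]
    calc |(sol s t).2| ≤ CC * |t - α| := hmvt
      _ ≤ CC * (β - α + 2) := by gcongr
  have hclv : ∀ s, ∀ t ∈ Icc (α-1) (β+1), cl (-K) K (sol s t).2 = (sol s t).2 := by
    intro s t ht
    have h1 := abs_le.1 (hvb s t ht)
    exact cl_of_mem (by rw [hK_def]; linarith [h1.1]) (by rw [hK_def]; linarith [h1.2])
  refine ⟨fun s t => (sol s t).1, fun s t => (sol s t).2,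
    fun s => by show (sol s α).1 = s; rw [hsol0 s],
    fun s => by show (sol s α).2 = 0; exact hv0 s, ?_, ?_, ?_⟩
  · -- derivative of the height component
    intro s t ht
    have h2 := (hasFDerivAt_fst (𝕜 := ℝ) (E := ℝ) (F := ℝ)).comp_hasDerivAt t (hsolD' s t ht)
    have h3 := hclv s t (Ioo_subset_Icc_self ht)
    simpa [h3, hV_def, Function.comp_def] using h2
  · intro s t ht
    have h2 := (hasFDerivAt_snd (𝕜 := ℝ) (E := ℝ) (F := ℝ)).comp_hasDerivAt t (hsolD' s t ht)
    simpa [hV_def, Function.comp_def] using h2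
  · -- continuity of the shooting map, by Grönwall
    have key : ∀ s s' : ℝ, dist (sol s β).2 (sol s' β).2
        ≤ Real.exp (Lm * (β - α)) * dist s s' := by
      intro s s'
      have hconts : ContinuousOn (sol s) (Icc α β) :=
        fun t ht => ((hsolD s t (hJsub ht)).continuousWithinAt).mono hJsub
      have hconts' : ContinuousOn (sol s') (Icc α β) :=
        fun t ht => ((hsolD s' t (hJsub ht)).continuousWithinAt).mono hJsub
      have hds : ∀ t ∈ Ico α β, HasDerivWithinAt (sol s) (V t (sol s t)) (Ici t) t :=
        fun t ht => (hsolD' s t ⟨by linarith [ht.1], by linarith [ht.2]⟩).hasDerivWithinAt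
      have hds' : ∀ t ∈ Ico α β, HasDerivWithinAt (sol s') (V t (sol s' t)) (Ici t) t :=
        fun t ht => (hsolD' s' t ⟨by linarith [ht.1], by linarith [ht.2]⟩).hasDerivWithinAt
      have ha : dist (sol s α) (sol s' α) ≤ dist s s' := by
        rw [hsol0, hsol0, Prod.dist_eq]
        simp [Real.dist_eq]
      have hgron := dist_le_of_trajectories_ODE (v := V) (K := Lm)
        (fun t => hV_lip t) hconts hds hconts' hds' ha β (right_mem_Icc.2 hab.le)
      have h2 : dist (sol s β).2 (sol s' β).2 ≤ dist (sol s β) (sol s' β) := by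
        rw [Prod.dist_eq]; exact le_max_right _ _
      calc dist (sol s β).2 (sol s' β).2 ≤ dist (sol s β) (sol s' β) := h2
        _ ≤ dist s s' * Real.exp (Lm * (β - α)) := hgron
        _ = Real.exp (Lm * (β - α)) * dist s s' := mul_comm _ _
    refine (LipschitzWith.of_dist_le_mul
      (K := Real.toNNReal (Real.exp (Lm * (β - α)))) fun s s' => ?_).continuous
    rw [Real.coe_toNNReal _ (Real.exp_nonneg _)]
    exact key s s'


end FHNaux

set_option maxHeartbeats 1600000 in
/-- Let `α < β`, `d > 0`, `b > 0`, and let `I, c : [α, β] → ℝ` be continuous.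
Then the stationary equation of the non-homogeneous FHN reaction-diffusion system
(with `f(u) = -u³ + 3u`, after eliminating `v = (u - c)/b`) admits a twice
continuously differentiable solution `u` with Neumann boundary conditions:
`d u'' + f(u) - u/b + c(x)/b + I(x) = 0` on `[α, β]`, `u'(α) = u'(β) = 0`. -/
theorem stmt_14 (α β d b : ℝ) (hab : α < β) (hd : 0 < d) (hb : 0 < b)
    (I c : ℝ → ℝ) (hI : ContinuousOn I (Set.Icc α β))
    (hc : ContinuousOn c (Set.Icc α β)) :
    ∃ u : ℝ → ℝ, ContDiff ℝ 2 u ∧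
      (∀ x ∈ Set.Icc α β,
        d * deriv (deriv u) x + (-(u x)^3 + 3*(u x)) - u x / b + c x / b + I x = 0) ∧
      deriv u α = 0 ∧ deriv u β = 0 := by
  classical
  -- a continuous bounded extension of the forcing term
  obtain ⟨Gh, Γ, hGhc, hΓ0, hΓ, hGheq⟩ :
      ∃ (Gh : ℝ → ℝ) (Γ : ℝ), Continuous Gh ∧ 0 ≤ Γ ∧ (∀ x, |Gh x| ≤ Γ) ∧
        ∀ x ∈ Set.Icc α β, Gh x = c x / b + I x := by
    have hGc : ContinuousOn (fun x => c x / b + I x) (Icc α β) := (hc.div_const b).add hI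
    obtain ⟨Γ₀, hΓ₀⟩ := isCompact_Icc.exists_bound_of_continuousOn hGc
    refine ⟨fun x => c (FHNaux.cl α β x) / b + I (FHNaux.cl α β x), max Γ₀ 0,
      hGc.comp_continuous (FHNaux.cl_continuous α β) (fun x => FHNaux.cl_mem hab.le x),
      le_max_right _ _, ?_, ?_⟩
    · intro x
      have h1 := hΓ₀ (FHNaux.cl α β x) (FHNaux.cl_mem hab.le x)
      rw [Real.norm_eq_abs] at h1
      exact h1.trans (le_max_left _ _)
    · intro x hx
      show c (FHNaux.cl α β x) / b + I (FHNaux.cl α β x) = c x / b + I x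
      rw [FHNaux.cl_of_mem hx.1 hx.2]
  -- the truncation height
  obtain ⟨M, hM2, hMΓ⟩ : ∃ M : ℝ, 2 ≤ M ∧ Γ + 3 ≤ M :=
    ⟨max 2 (Γ + 3), le_max_left _ _, le_max_right _ _⟩
  have hM0 : (0:ℝ) < M := by linarith
  -- the truncated nonlinearity and the solution family
  obtain ⟨CC, Lp, hCC0, H, hHb, hH_up, hH_dn, hH_lip, hH_cont, hH_eq⟩ :=
    FHNaux.exists_H b d M Γ hb hd Gh hGhc hΓ hΓ0 hM2 hMΓ
  obtain ⟨y, v, hy0, hv0, hyD, hvD, hScont⟩ :=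
    FHNaux.exists_sol α β CC Lp hab hCC0 H hHb hH_lip hH_cont
  have hδ : 0 < 3/d := by positivity
  have hIccIoo : Icc α β ⊆ Ioo (α-1) (β+1) :=
    fun t ht => ⟨by linarith [ht.1], by linarith [ht.2]⟩
  have hycont : ∀ s, ContinuousOn (y s) (Ioo (α-1) (β+1)) :=
    fun s t ht => (hyD s t ht).continuousAt.continuousWithinAt
  have hWcont : ∀ s, ContinuousOn (fun t => H t (y s t)) (Ioo (α-1) (β+1)) := fun s =>
    hH_cont.comp_continuousOn' (f := fun t => (t, y s t)) (continuousOn_id.prodMk (hycont s))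
  -- shooting upward from height M
  have hup := FHNaux.shoot_up (M := M) (δ := 3/d) hab hδ (y := y M) (v := v M)
    (W := fun t => H t (y M t))
    (fun t ht => hyD M t (hIccIoo ht)) (fun t ht => hvD M t (hIccIoo ht))
    ((hWcont M).mono hIccIoo) (fun t _ hM => hH_up t _ hM)
    (le_of_eq (hy0 M).symm) (le_of_eq (hv0 M).symm)
  have hSMpos : 0 < v M β := by
    have h1 := (hup β (right_mem_Icc.2 hab.le)).2
    have h2 : 0 < 3/d * (β - α) := mul_pos hδ (by linarith)
    linarith
  -- shooting downward from height -M
  have hdn := FHNaux.shoot_up (M := M) (δ := 3/d) hab hδ (y := fun t => -(y (-M) t))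
    (v := fun t => -(v (-M) t)) (W := fun t => -(H t (y (-M) t)))
    (fun t ht => (hyD (-M) t (hIccIoo ht)).neg) (fun t ht => (hvD (-M) t (hIccIoo ht)).neg)
    (((hWcont (-M)).mono hIccIoo).neg)
    (fun t _ hM => by
      have hM' : M ≤ -(y (-M) t) := hM
      have h3 := hH_dn t (y (-M) t) (by linarith)
      show 3/d ≤ -(H t (y (-M) t))
      linarith)
    (by show M ≤ -(y (-M) α); rw [hy0]; rw [neg_neg])
    (by show (0:ℝ) ≤ -(v (-M) α); rw [hv0]; norm_num)
  have hSMneg : v (-M) β < 0 := by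
    have h1 : 3/d * (β - α) ≤ -(v (-M) β) := (hdn β (right_mem_Icc.2 hab.le)).2
    have h2 : 0 < 3/d * (β - α) := mul_pos hδ (by linarith)
    linarith
  -- intermediate value theorem
  have hivt := intermediate_value_Icc (show -M ≤ M by linarith) hScont.continuousOn
  have h0mem : (0:ℝ) ∈ Icc (v (-M) β) (v M β) := ⟨hSMneg.le, hSMpos.le⟩
  obtain ⟨s₀, hs₀mem, hs₀⟩ := hivt h0mem
  have hvβ : v s₀ β = 0 := hs₀
  have hvα : v s₀ α = 0 := hv0 s₀
  -- maximum principle: the solution stays in [-M, M] on [α, β]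
  have hYd : ∀ t ∈ Icc α β, HasDerivAt (y s₀) (v s₀ t) t := fun t ht => hyD s₀ t (hIccIoo ht)
  have hVd : ∀ t ∈ Icc α β, HasDerivAt (v s₀) (H t (y s₀ t)) t := fun t ht => hvD s₀ t (hIccIoo ht)
  have hWc : ContinuousOn (fun t => H t (y s₀ t)) (Icc α β) := (hWcont s₀).mono hIccIoo
  have hYle : ∀ t ∈ Icc α β, y s₀ t ≤ M :=
    FHNaux.max_le (M := M) (δ := 3/d) hab hδ hYd hVd hWc
      (fun t _ hM => hH_up t _ hM.le) hvα hvβ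
  have hYge : ∀ t ∈ Icc α β, -M ≤ y s₀ t := by
    have h := FHNaux.max_le (M := M) (δ := 3/d) hab hδ (y := fun t => -(y s₀ t))
      (v := fun t => -(v s₀ t)) (W := fun t => -(H t (y s₀ t)))
      (fun t ht => (hYd t ht).neg) (fun t ht => (hVd t ht).neg) hWc.neg
      (fun t _ hM => by
        have hM' : M < -(y s₀ t) := hM
        have h3 := hH_dn t (y s₀ t) (by linarith)
        show 3/d ≤ -(H t (y s₀ t))
        linarith)
      (by show -(v s₀ α) = 0; rw [hvα]; norm_num)
      (by show -(v s₀ β) = 0; rw [hvβ]; norm_num)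
    intro t ht
    have h2 : -(y s₀ t) ≤ M := h t ht
    linarith
  -- glue to a global C² function
  have hA'B' : α - 1/2 < β + 1/2 := by linarith
  have hsubA'B' : Icc (α - 1/2) (β + 1/2) ⊆ Ioo (α-1) (β+1) := fun t ht =>
    ⟨by linarith [ht.1], by linarith [ht.2]⟩
  obtain ⟨u, hu2, hprops⟩ := FHNaux.glue3 hA'B'
    (Y := y s₀) (Vv := v s₀) (W := fun t => H t (y s₀ t))
    (fun x hx => hyD s₀ x (hsubA'B' hx)) (fun x hx => hvD s₀ x (hsubA'B' hx))
    ((hWcont s₀).mono hsubA'B')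
  refine ⟨u, hu2, ?_, ?_, ?_⟩
  · intro x hx
    have hx' : x ∈ Icc (α - 1/2) (β + 1/2) := ⟨by linarith [hx.1], by linarith [hx.2]⟩
    obtain ⟨he1, he2, he3⟩ := hprops x hx'
    have hval : deriv (deriv u) x
        = ((y s₀ x)^3 - 3*(y s₀ x) + (y s₀ x)/b - (c x / b + I x)) / d := by
      rw [he3, hH_eq x (y s₀ x) (hYge x hx) (hYle x hx), hGheq x hx]
    rw [hval, he1]
    field_simp
    ring
  · rw [(hprops α ⟨by linarith, by linarith⟩).2.1]
    exact hvα
  · rw [(hprops β ⟨by linarith, by linarith⟩).2.1]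
    exact hvβ
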